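/- For a 2D complex signal x of size L₁₁ × L₁₂, the 1D autocorrelation of its column-stacked vectorization is determined by the 2D autocorrelation: for m ≥ 0, a_{1D}[m] = a_{2D}[m mod L₁₁, ⌊m/L₁₁⌋] + a_{2D}[(m mod L₁₁) − L₁₁, ⌊m/L₁₁⌋ + 1], where out-of-range entries of the 2D signal in the second coordinate are zero. -/
import Mathlib


/-- Zero-extension of a 2D finite signal to `ℤ × ℤ`. -/
noncomputable def ext2 (L₁₁ L₁₂ : ℕ) (x : Fin L₁₁ → Fin L₁₂ → ℂ) (i j : ℤ) : ℂ :=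
  if h : 0 ≤ i ∧ i < (L₁₁ : ℤ) ∧ 0 ≤ j ∧ j < (L₁₂ : ℤ) then
    x ⟨i.toNat, by omega⟩ ⟨j.toNat, by omega⟩
  else 0

/-- Column-stacked vectorization, extended by zero to `ℤ`:
`x₁D[l₂·L₁₁ + l₁] = x[l₁, l₂]`. -/
noncomputable def vec1D (L₁₁ L₁₂ : ℕ) (x : Fin L₁₁ → Fin L₁₂ → ℂ) (n : ℤ) : ℂ :=
  ext2 L₁₁ L₁₂ x (n % (L₁₁ : ℤ)) (n / (L₁₁ : ℤ))

/-- 1D autocorrelation of the vectorization. -/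
noncomputable def autocorr1D (L₁₁ L₁₂ : ℕ) (x : Fin L₁₁ → Fin L₁₂ → ℂ) (m : ℤ) : ℂ :=
  ∑ n ∈ Finset.range (L₁₁ * L₁₂),
    vec1D L₁₁ L₁₂ x (n : ℤ) * (starRingEnd ℂ) (vec1D L₁₁ L₁₂ x ((n : ℤ) - m))

/-- 2D autocorrelation. -/
noncomputable def autocorr2D (L₁₁ L₁₂ : ℕ) (x : Fin L₁₁ → Fin L₁₂ → ℂ) (m₁ m₂ : ℤ) : ℂ :=
  ∑ n₁ : Fin L₁₁, ∑ n₂ : Fin L₁₂,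
    x n₁ n₂ * (starRingEnd ℂ) (ext2 L₁₁ L₁₂ x ((n₁ : ℤ) - m₁) ((n₂ : ℤ) - m₂))

lemma emod_of_lt' (L a b : ℤ) (hL : 0 < L) (h0 : 0 ≤ a) (h1 : a < L) :
    (a + L * b) % L = a ∧ (a + L * b) / L = b := by
  constructor
  · rw [Int.add_mul_emod_self_left, Int.emod_eq_of_lt h0 h1]
  · rw [Int.add_mul_ediv_left _ _ (by omega), Int.ediv_eq_zero_of_lt h0 h1, zero_add]

lemma vec1D_at (L₁₁ L₁₂ : ℕ) (hL : 0 < L₁₁) (x : Fin L₁₁ → Fin L₁₂ → ℂ)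
    (a b : ℤ) (h0 : 0 ≤ a) (h1 : a < L₁₁) :
    vec1D L₁₁ L₁₂ x (a + L₁₁ * b) = ext2 L₁₁ L₁₂ x a b := by
  obtain ⟨h2, h3⟩ := emod_of_lt' L₁₁ a b (by exact_mod_cast hL) h0 h1
  rw [vec1D, h2, h3]

lemma ext2_fin (L₁₁ L₁₂ : ℕ) (x : Fin L₁₁ → Fin L₁₂ → ℂ) (n₁ : Fin L₁₁) (n₂ : Fin L₁₂) :
    ext2 L₁₁ L₁₂ x (n₁ : ℤ) (n₂ : ℤ) = x n₁ n₂ := by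
  rw [ext2, dif_pos ⟨by positivity, by exact_mod_cast n₁.2, by positivity, by exact_mod_cast n₂.2⟩]
  congr

lemma vec_split (L₁₁ L₁₂ : ℕ) (hL : 0 < L₁₁) (x : Fin L₁₁ → Fin L₁₂ → ℂ)
    (n₁ : Fin L₁₁) (n₂ : Fin L₁₂) (m : ℤ) :
    vec1D L₁₁ L₁₂ x ((n₁ : ℤ) + L₁₁ * (n₂ : ℤ) - m)
      = ext2 L₁₁ L₁₂ x ((n₁ : ℤ) - m % L₁₁) ((n₂ : ℤ) - m / L₁₁)
        + ext2 L₁₁ L₁₂ x ((n₁ : ℤ) - (m % L₁₁ - L₁₁)) ((n₂ : ℤ) - (m / L₁₁ + 1)) := by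
  have hL' : (0:ℤ) < L₁₁ := by exact_mod_cast hL
  have hm := Int.mul_ediv_add_emod m (L₁₁:ℤ)
  set r := m % (L₁₁:ℤ) with hr
  set q := m / (L₁₁:ℤ) with hq
  have hr0 : 0 ≤ r := Int.emod_nonneg m (by omega)
  have hr1 : r < L₁₁ := Int.emod_lt_of_pos m hL'
  have h1 : (0:ℤ) ≤ n₁ := by positivity
  have h2 : (n₁:ℤ) < L₁₁ := by exact_mod_cast n₁.2
  rcases le_or_gt r (n₁:ℤ) with h | h
  · have e : (n₁ : ℤ) + L₁₁ * (n₂ : ℤ) - m = ((n₁:ℤ) - r) + L₁₁ * ((n₂:ℤ) - q) := by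
      linear_combination hm
    rw [e, vec1D_at L₁₁ L₁₂ hL x _ _ (by omega) (by omega)]
    have : ext2 L₁₁ L₁₂ x ((n₁ : ℤ) - (r - L₁₁)) ((n₂ : ℤ) - (q + 1)) = 0 := by
      rw [ext2, dif_neg]; omega
    rw [this, add_zero]
  · have e : (n₁ : ℤ) + L₁₁ * (n₂ : ℤ) - m = ((n₁:ℤ) - r + L₁₁) + L₁₁ * ((n₂:ℤ) - q - 1) := by
      linear_combination hm
    rw [e, vec1D_at L₁₁ L₁₂ hL x _ _ (by omega) (by omega)]
    have : ext2 L₁₁ L₁₂ x ((n₁ : ℤ) - r) ((n₂ : ℤ) - q) = 0 := by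
      rw [ext2, dif_neg]; omega
    rw [this, zero_add]
    congr 1 <;> ring

/-- The 1D autocorrelation of the column-stacked vectorization of a 2D signal is
determined by its 2D autocorrelation:
`a₁D[m] = a₂D[m mod L₁₁, ⌊m/L₁₁⌋] + a₂D[(m mod L₁₁) − L₁₁, ⌊m/L₁₁⌋ + 1]` for `m ≥ 0`. -/
theorem autocorr1D_eq_autocorr2D (L₁₁ L₁₂ : ℕ) (hL₁₁ : 0 < L₁₁)
    (x : Fin L₁₁ → Fin L₁₂ → ℂ) :
    ∀ m : ℤ, 0 ≤ m →
      autocorr1D L₁₁ L₁₂ x m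
        = autocorr2D L₁₁ L₁₂ x (m % (L₁₁ : ℤ)) (m / (L₁₁ : ℤ))
          + autocorr2D L₁₁ L₁₂ x (m % (L₁₁ : ℤ) - (L₁₁ : ℤ)) (m / (L₁₁ : ℤ) + 1) := by
  intro m _
  rw [autocorr1D, Nat.mul_comm, ← Fin.sum_univ_eq_sum_range,
    ← Equiv.sum_comp (finProdFinEquiv (m := L₁₂) (n := L₁₁)), Fintype.sum_prod_type,
    Finset.sum_comm, autocorr2D, autocorr2D, ← Finset.sum_add_distrib]
  refine Finset.sum_congr rfl fun n₁ _ => ?_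
  rw [← Finset.sum_add_distrib]
  refine Finset.sum_congr rfl fun n₂ _ => ?_
  have hval : ((finProdFinEquiv (n₂, n₁) : Fin (L₁₂ * L₁₁)) : ℤ)
      = (n₁ : ℤ) + (L₁₁ : ℤ) * (n₂ : ℤ) := by
    simp only [finProdFinEquiv_apply_val]; push_cast; ring
  rw [hval, vec1D_at L₁₁ L₁₂ hL₁₁ x _ _ (by positivity) (by exact_mod_cast n₁.2),
    ext2_fin, vec_split L₁₁ L₁₂ hL₁₁, map_add, mul_add]
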